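/- If F is a forest and m is the maximal cardinality of an independent set of vertices in F, then Hom(F̄, K_n) is homotopy equivalent to Hom(K_m, K_n), where F̄ is the unlooped complement of F. -/

import Mathlib

open scoped Topology

/-- A cell of the Lovász `Hom` complex of multihomomorphisms between two graphs,
given by adjacency relations `A` and `B`: a function assigning to each vertex a
nonempty set of vertices such that adjacent vertices get completely adjacent sets. -/
@[ext]
structure HomCell {V W : Type*} (A : V → V → Prop) (B : W → W → Prop) where
  η : V → Set W
  nonempty : ∀ v, (η v).Nonempty
  adj : ∀ ⦃x y⦄, A x y → ∀ a ∈ η x, ∀ b ∈ η y, B a b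

namespace HomCell

variable {U V W : Type*} {A : V → V → Prop} {B : W → W → Prop}

theorem eta_injective : Function.Injective (HomCell.η (A := A) (B := B)) := by
  rintro ⟨f, _, _⟩ ⟨g, _, _⟩ h
  simpa using h

/-- Cells are ordered by pointwise inclusion (the face order of the `Hom` complex). -/
instance : PartialOrder (HomCell A B) := PartialOrder.lift HomCell.η eta_injective

theorem le_def {c d : HomCell A B} : c ≤ d ↔ ∀ v, c.η v ⊆ d.η v := Iff.rfl

noncomputable instance [Finite V] [Finite W] : Fintype (HomCell A B) := by
  classical
  have : Finite (HomCell A B) := Finite.of_injective _ (eta_injective (A := A) (B := B))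
  exact Fintype.ofFinite _

noncomputable instance : DecidableEq (HomCell A B) := Classical.decEq _

/-- Precomposition with a graph homomorphism `φ : (U,A') → (V,A)`: the induced
cellular (monotone) map `Hom(V,W) → Hom(U,W)`; this is the contravariant functoriality
of `Hom(-,H)`. -/
def pull {A' : U → U → Prop} (φ : U → V) (hφ : ∀ ⦃x y⦄, A' x y → A (φ x) (φ y)) :
    HomCell A B →o HomCell A' B where
  toFun c :=
    { η := fun u => c.η (φ u)
      nonempty := fun u => c.nonempty (φ u)
      adj := fun _ _ hxy => c.adj (hφ hxy) }
  monotone' := fun _ _ h u => h (φ u)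

/-- Postcomposition with a graph homomorphism `φ : (V,B) → (W,B')`: the induced
cellular (monotone) map `Hom(U,V) → Hom(U,W)`; this is the covariant functoriality
of `Hom(G,-)`. -/
def push {U₀ V₀ W₀ : Type*} {A₀ : U₀ → U₀ → Prop} {B₀ : V₀ → V₀ → Prop}
    {B₀' : W₀ → W₀ → Prop} (φ : V₀ → W₀)
    (hφ : ∀ ⦃x y⦄, B₀ x y → B₀' (φ x) (φ y)) (c : HomCell A₀ B₀) : HomCell A₀ B₀' where
  η v := φ '' c.η v
  nonempty v := (c.nonempty v).image φ
  adj := by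
    rintro x y hxy a ⟨a', ha', rfl⟩ b ⟨b', hb', rfl⟩
    exact hφ (c.adj hxy a' ha' b' hb')

end HomCell

/-- The geometric realization of the order complex of a preorder `P`:
formal convex combinations supported on finite chains of `P`. -/
def OrderComplex (P : Type*) [Preorder P] : Type _ :=
  { f : P → ℝ // (∀ x, 0 ≤ f x) ∧ HasSum f 1 ∧ IsChain (· ≤ ·) {x | f x ≠ 0} }

instance (P : Type*) [Preorder P] : TopologicalSpace (OrderComplex P) :=
  instTopologicalSpaceSubtype

/-- The topological space underlying the Lovász complex `Hom(G,H)` for graphs given by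
adjacency relations `A`, `B`: the (realization of the) poset of multihomomorphism cells. -/
def HomComplex {V W : Type*} (A : V → V → Prop) (B : W → W → Prop) : Type _ :=
  OrderComplex (HomCell A B)

instance {V W : Type*} (A : V → V → Prop) (B : W → W → Prop) :
    TopologicalSpace (HomComplex A B) := instTopologicalSpaceSubtype

/-- The simplicial map on order complexes induced by a monotone map of posets:
barycentric pushforward of weights. -/
noncomputable def OrderHom.realize {P Q : Type*} [Preorder P] [Preorder Q] [Fintype P]
    [DecidableEq Q] (φ : P →o Q) : C(OrderComplex P, OrderComplex Q) where
  toFun x := by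
    refine ⟨fun q => ∑ p ∈ Finset.univ.filter (fun p => φ p = q), x.1 p, ?_, ?_, ?_⟩
    · intro q
      exact Finset.sum_nonneg fun p _ => x.2.1 p
    · have h1 : ∑ p, x.1 p = 1 := (hasSum_fintype x.1).unique x.2.2.1
      have key : ∀ q ∉ Finset.univ.image φ,
          (∑ p ∈ Finset.univ.filter (fun p => φ p = q), x.1 p) = 0 := by
        intro q hq
        apply Finset.sum_eq_zero
        intro p hp
        simp only [Finset.mem_filter] at hp
        exact absurd (Finset.mem_image.mpr ⟨p, Finset.mem_univ p, hp.2⟩) hq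
      have : HasSum (fun q => ∑ p ∈ Finset.univ.filter (fun p => φ p = q), x.1 p) _ :=
        hasSum_sum_of_ne_finset_zero (s := Finset.univ.image φ)
        (f := fun q => ∑ p ∈ Finset.univ.filter (fun p => φ p = q), x.1 p) key
      have h2 : (∑ q ∈ Finset.univ.image φ,
          ∑ p ∈ Finset.univ.filter (fun p => φ p = q), x.1 p) = ∑ p, x.1 p :=
        Finset.sum_fiberwise_of_maps_to
          (fun p _ => Finset.mem_image_of_mem φ (Finset.mem_univ p)) _
      rwa [h2, h1] at this
    · intro q1 hq1 q2 hq2 hne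
      simp only [Set.mem_setOf_eq] at hq1 hq2
      obtain ⟨p1, hp1, hxp1⟩ : ∃ p, φ p = q1 ∧ x.1 p ≠ 0 := by
        by_contra h
        push_neg at h
        exact hq1 (Finset.sum_eq_zero fun p hp => by
          simp only [Finset.mem_filter] at hp
          exact h p hp.2)
      obtain ⟨p2, hp2, hxp2⟩ : ∃ p, φ p = q2 ∧ x.1 p ≠ 0 := by
        by_contra h
        push_neg at h
        exact hq2 (Finset.sum_eq_zero fun p hp => by
          simp only [Finset.mem_filter] at hp
          exact h p hp.2)
      have hp12 : p1 ≠ p2 := fun h => hne (hp1 ▸ hp2 ▸ h ▸ rfl)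
      rcases x.2.2.2 hxp1 hxp2 hp12 with h | h
      · exact Or.inl (hp1 ▸ hp2 ▸ φ.monotone h)
      · exact Or.inr (hp2 ▸ hp1 ▸ φ.monotone h)
  continuous_toFun := by
    apply Continuous.subtype_mk
    apply continuous_pi
    intro q
    exact continuous_finset_sum _ fun p _ => (continuous_apply p).comp continuous_subtype_val
set_option linter.unusedSectionVars false

section OrderComplexLemmas

variable {P Q R : Type*} [PartialOrder P] [PartialOrder Q] [PartialOrder R]
  [Fintype P] [Fintype Q] [DecidableEq Q] [DecidableEq R]

lemma OrderComplex.sum_one (x : OrderComplex P) : ∑ p, x.1 p = 1 :=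
  (hasSum_fintype x.1).unique x.2.2.1

lemma realize_apply (φ : P →o Q) (x : OrderComplex P) (q : Q) :
    (φ.realize x).1 q = ∑ p ∈ Finset.univ.filter (fun p => φ p = q), x.1 p := rfl

lemma realize_comp (φ : Q →o R) (ψ : P →o Q) :
    (φ.comp ψ).realize = φ.realize.comp ψ.realize := by
  apply ContinuousMap.ext; intro x
  apply Subtype.ext; funext r
  show ((φ.comp ψ).realize x).1 r = (φ.realize (ψ.realize x)).1 r
  simp only [realize_apply]
  rw [Finset.sum_fiberwise_eq_sum_filter Finset.univ (Finset.univ.filter (fun q => φ q = r)) ψ x.1]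
  apply Finset.sum_congr _ (fun _ _ => rfl)
  ext p
  simp

lemma realize_id [DecidableEq P] : (OrderHom.id : P →o P).realize = ContinuousMap.id _ := by
  classical
  apply ContinuousMap.ext; intro x
  apply Subtype.ext; funext p
  show (OrderHom.id.realize x).1 p = x.1 p
  rw [realize_apply]
  rw [show Finset.univ.filter (fun q => OrderHom.id q = p) = {p} by ext q; simp [eq_comm]]
  simp

end OrderComplexLemmas
section Homotopy
open scoped Classical

variable {P : Type*} [PartialOrder P] [Fintype P]

/-- Cumulative weight at or below `p`. -/
noncomputable def cumS (x : P → ℝ) (p : P) : ℝ :=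
  ∑ p' ∈ Finset.univ.filter (fun p' => p' ≤ p), x p'

/-- Cumulative weight strictly below `p` (among elements `≤ p`). -/
noncomputable def cumT (x : P → ℝ) (p : P) : ℝ :=
  ∑ p' ∈ Finset.univ.filter (fun p' => p' ≤ p ∧ p' ≠ p), x p'

lemma cumT_add (x : P → ℝ) (p : P) : cumT x p + x p = cumS x p := by
  classical
  rw [cumS, cumT]
  rw [show (Finset.univ.filter (fun p' => p' ≤ p ∧ p' ≠ p))
      = (Finset.univ.filter (fun p' => p' ≤ p)).erase p by
    ext q; simp [Finset.mem_erase, and_comm]]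
  exact Finset.sum_erase_add _ _ (by simp)

lemma cumT_nonneg {x : P → ℝ} (hx : ∀ p, 0 ≤ x p) (p : P) : 0 ≤ cumT x p :=
  Finset.sum_nonneg fun p' _ => hx p'

lemma cumS_nonneg {x : P → ℝ} (hx : ∀ p, 0 ≤ x p) (p : P) : 0 ≤ cumS x p :=
  Finset.sum_nonneg fun p' _ => hx p'

lemma cumT_le_cumS {x : P → ℝ} (hx : ∀ p, 0 ≤ x p) (p : P) : cumT x p ≤ cumS x p := by
  have := cumT_add x p
  have := hx p
  linarith

lemma cumS_le_sum {x : P → ℝ} (hx : ∀ p, 0 ≤ x p) (p : P) : cumS x p ≤ ∑ p', x p' :=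
  Finset.sum_le_sum_of_subset_of_nonneg (Finset.filter_subset _ _) (fun p' _ _ => hx p')

lemma cumS_le_cumT_of_lt {x : P → ℝ} (hx : ∀ p, 0 ≤ x p) {p q : P} (hpq : p ≤ q)
    (hne : p ≠ q) : cumS x p ≤ cumT x q := by
  classical
  apply Finset.sum_le_sum_of_subset_of_nonneg _ (fun p' _ _ => hx p')
  intro p' hp'
  simp only [Finset.mem_filter, Finset.mem_univ, true_and] at hp' ⊢
  refine ⟨hp'.trans hpq, fun h => hne (le_antisymm hpq ?_)⟩
  rw [h] at hp'; exact hp'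

/-- Level-0 weight for the prism homotopy. -/
noncomputable def bkW0 (c : ℝ) (x : P → ℝ) (p : P) : ℝ :=
  min (cumS x p) c - min (cumT x p) c

/-- Level-1 weight for the prism homotopy. -/
noncomputable def bkW1 (c : ℝ) (x : P → ℝ) (p : P) : ℝ :=
  (cumS x p - min (cumS x p) c) - (cumT x p - min (cumT x p) c)

lemma bkW0_add_bkW1 (c : ℝ) (x : P → ℝ) (p : P) : bkW0 c x p + bkW1 c x p = x p := by
  have := cumT_add x p
  rw [bkW0, bkW1]; linarith

lemma bkW0_nonneg {x : P → ℝ} (hx : ∀ p, 0 ≤ x p) (c : ℝ) (p : P) : 0 ≤ bkW0 c x p :=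
  sub_nonneg.2 (min_le_min (cumT_le_cumS hx p) le_rfl)

lemma bkW1_nonneg {x : P → ℝ} (hx : ∀ p, 0 ≤ x p) (c : ℝ) (p : P) : 0 ≤ bkW1 c x p := by
  have h := cumT_le_cumS hx p
  rw [bkW1]
  rcases le_total (cumS x p) c with h1 | h1 <;> rcases le_total (cumT x p) c with h2 | h2 <;>
    simp [min_eq_left, min_eq_right, h1, h2] <;> linarith

lemma bkW0_ne {x : P → ℝ} (hx : ∀ p, 0 ≤ x p) {c : ℝ} {p : P} (h : bkW0 c x p ≠ 0) :
    x p ≠ 0 ∧ cumT x p < c := by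
  constructor
  · intro hxp
    apply h
    have := cumT_add x p
    rw [bkW0, show cumS x p = cumT x p by linarith, sub_self]
  · by_contra hc
    push_neg at hc
    apply h
    rw [bkW0, min_eq_right hc, min_eq_right (hc.trans (cumT_le_cumS hx p)), sub_self]
lemma bkW1_ne {x : P → ℝ} (hx : ∀ p, 0 ≤ x p) {c : ℝ} {p : P} (h : bkW1 c x p ≠ 0) :
    x p ≠ 0 ∧ c < cumS x p := by
  constructor
  · intro hxp
    apply h
    have := cumT_add x p
    rw [bkW1, show cumS x p = cumT x p by linarith, sub_self]
  · by_contra hc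
    push_neg at hc
    apply h
    rw [bkW1, min_eq_left hc, min_eq_left ((cumT_le_cumS hx p).trans hc), sub_self, sub_self, sub_zero]

end Homotopy
section Homotopy2
set_option linter.unusedSectionVars false
open scoped Classical

variable {P Q : Type*} [PartialOrder P] [PartialOrder Q] [Fintype P] [Fintype Q] [DecidableEq Q]

/-- The time-`c` slice of the prism homotopy between realizations of `φ ≤ ψ`. -/
noncomputable def bkH (φ ψ : P →o Q) (c : ℝ) (x : P → ℝ) (q : Q) : ℝ :=
  (∑ p ∈ Finset.univ.filter (fun p => φ p = q), bkW0 c x p)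
  + (∑ p ∈ Finset.univ.filter (fun p => ψ p = q), bkW1 c x p)

lemma bkH_nonneg (φ ψ : P →o Q) (c : ℝ) {x : P → ℝ} (hx : ∀ p, 0 ≤ x p) (q : Q) :
    0 ≤ bkH φ ψ c x q :=
  add_nonneg (Finset.sum_nonneg fun p _ => bkW0_nonneg hx c p)
    (Finset.sum_nonneg fun p _ => bkW1_nonneg hx c p)

lemma bkH_sum (φ ψ : P →o Q) (c : ℝ) (x : P → ℝ) :
    ∑ q, bkH φ ψ c x q = ∑ p, x p := by
  unfold bkH
  rw [Finset.sum_add_distrib,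
    Finset.sum_fiberwise_of_maps_to (fun p _ => Finset.mem_univ (φ p)) (bkW0 c x),
    Finset.sum_fiberwise_of_maps_to (fun p _ => Finset.mem_univ (ψ p)) (bkW1 c x),
    ← Finset.sum_add_distrib]
  exact Finset.sum_congr rfl fun p _ => bkW0_add_bkW1 c x p

lemma bkH_mem_ne {φ ψ : P →o Q} {c : ℝ} {x : P → ℝ} (hx : ∀ p, 0 ≤ x p) {q : Q}
    (hq : bkH φ ψ c x q ≠ 0) :
    ∃ p, x p ≠ 0 ∧ ((φ p = q ∧ cumT x p < c) ∨ (ψ p = q ∧ c < cumS x p)) := by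
  rw [bkH] at hq
  have h01 : (∑ p ∈ Finset.univ.filter (fun p => φ p = q), bkW0 c x p) ≠ 0 ∨
      (∑ p ∈ Finset.univ.filter (fun p => ψ p = q), bkW1 c x p) ≠ 0 := by
    by_contra h
    push_neg at h
    rw [h.1, h.2, add_zero] at hq
    exact hq rfl
  rcases h01 with h | h
  · obtain ⟨p, hp, hp0⟩ := Finset.exists_ne_zero_of_sum_ne_zero h
    simp only [Finset.mem_filter, Finset.mem_univ, true_and] at hp
    exact ⟨p, (bkW0_ne hx hp0).1, Or.inl ⟨hp, (bkW0_ne hx hp0).2⟩⟩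
  · obtain ⟨p, hp, hp0⟩ := Finset.exists_ne_zero_of_sum_ne_zero h
    simp only [Finset.mem_filter, Finset.mem_univ, true_and] at hp
    exact ⟨p, (bkW1_ne hx hp0).1, Or.inr ⟨hp, (bkW1_ne hx hp0).2⟩⟩

lemma bkH_chain (φ ψ : P →o Q) (hφψ : φ ≤ ψ) (c : ℝ) (x : OrderComplex P) :
    IsChain (· ≤ ·) {q | bkH φ ψ c x.1 q ≠ 0} := by
  intro q1 hq1 q2 hq2 hne
  obtain ⟨p1, hx1, hc1⟩ := bkH_mem_ne x.2.1 hq1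
  obtain ⟨p2, hx2, hc2⟩ := bkH_mem_ne x.2.1 hq2
  have hcomp : p1 ≤ p2 ∨ p2 ≤ p1 := by
    rcases eq_or_ne p1 p2 with rfl | h12
    · exact Or.inl le_rfl
    · exact x.2.2.2 hx1 hx2 h12
  rcases hc1 with ⟨e1, hT1⟩ | ⟨e1, hS1⟩ <;> rcases hc2 with ⟨e2, hT2⟩ | ⟨e2, hS2⟩
  · rcases hcomp with h | h
    · exact Or.inl (e1 ▸ e2 ▸ φ.monotone h)
    · exact Or.inr (e1 ▸ e2 ▸ φ.monotone h)
  · rcases hcomp with h | h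
    · exact Or.inl (e1 ▸ e2 ▸ (φ.monotone h).trans (hφψ p2))
    · rcases eq_or_ne p2 p1 with rfl | hne'
      · exact Or.inl (e1 ▸ e2 ▸ hφψ p2)
      · exact absurd (cumS_le_cumT_of_lt x.2.1 h hne') (by linarith)
  · rcases hcomp with h | h
    · rcases eq_or_ne p1 p2 with rfl | hne'
      · exact Or.inr (e1 ▸ e2 ▸ hφψ p1)
      · exact absurd (cumS_le_cumT_of_lt x.2.1 h hne') (by linarith)
    · exact Or.inr (e1 ▸ e2 ▸ (φ.monotone h).trans (hφψ p1))
  · rcases hcomp with h | h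
    · exact Or.inl (e1 ▸ e2 ▸ ψ.monotone h)
    · exact Or.inr (e1 ▸ e2 ▸ ψ.monotone h)

lemma bkH_one (φ ψ : P →o Q) (x : OrderComplex P) (q : Q) :
    bkH φ ψ 1 x.1 q = ∑ p ∈ Finset.univ.filter (fun p => φ p = q), x.1 p := by
  have hle1 : ∀ p, cumS x.1 p ≤ 1 := fun p => (cumS_le_sum x.2.1 p).trans_eq (OrderComplex.sum_one x)
  rw [bkH]
  have h0 : ∀ p, bkW0 1 x.1 p = x.1 p := by
    intro p
    rw [bkW0, min_eq_left (hle1 p), min_eq_left ((cumT_le_cumS x.2.1 p).trans (hle1 p)),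
      ← cumT_add x.1 p]
    ring
  have h1 : ∀ p, bkW1 1 x.1 p = 0 := by
    intro p
    rw [bkW1, min_eq_left (hle1 p), min_eq_left ((cumT_le_cumS x.2.1 p).trans (hle1 p))]
    ring
  simp only [h0, h1, Finset.sum_const_zero, add_zero]

lemma bkH_zero (φ ψ : P →o Q) (x : OrderComplex P) (q : Q) :
    bkH φ ψ 0 x.1 q = ∑ p ∈ Finset.univ.filter (fun p => ψ p = q), x.1 p := by
  rw [bkH]
  have h0 : ∀ p, bkW0 0 x.1 p = 0 := by
    intro p
    rw [bkW0, min_eq_right (cumS_nonneg x.2.1 p), min_eq_right (cumT_nonneg x.2.1 p)]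
    ring
  have h1 : ∀ p, bkW1 0 x.1 p = x.1 p := by
    intro p
    rw [bkW1, min_eq_right (cumS_nonneg x.2.1 p), min_eq_right (cumT_nonneg x.2.1 p),
      sub_zero, sub_zero, ← cumT_add x.1 p]
    ring
  simp only [h0, h1, Finset.sum_const_zero, zero_add]

lemma realize_homotopic_of_le {φ ψ : P →o Q} (hφψ : φ ≤ ψ) :
    φ.realize.Homotopic ψ.realize := by
  have hcS : ∀ p : P, Continuous fun tx : unitInterval × OrderComplex P => cumS tx.2.1 p := by
    intro p
    exact continuous_finset_sum _ fun p' _ =>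
      (continuous_apply p').comp (continuous_subtype_val.comp continuous_snd)
  have hcT : ∀ p : P, Continuous fun tx : unitInterval × OrderComplex P => cumT tx.2.1 p := by
    intro p
    exact continuous_finset_sum _ fun p' _ =>
      (continuous_apply p').comp (continuous_subtype_val.comp continuous_snd)
  have hct : Continuous fun tx : unitInterval × OrderComplex P => (1 : ℝ) - (tx.1 : ℝ) :=
    continuous_const.sub (continuous_subtype_val.comp continuous_fst)
  refine ⟨⟨⟨fun tx => ⟨fun q => bkH φ ψ (1 - (tx.1 : ℝ)) tx.2.1 q, ?_, ?_, ?_⟩, ?_⟩, ?_, ?_⟩⟩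
  · exact fun q => bkH_nonneg _ _ _ tx.2.2.1 q
  · have h1 : ∑ q, bkH φ ψ (1 - (tx.1 : ℝ)) tx.2.1 q = 1 := by
      rw [bkH_sum, OrderComplex.sum_one]
    have h2 := hasSum_fintype (fun q => bkH φ ψ (1 - (tx.1 : ℝ)) tx.2.1 q)
    rwa [h1] at h2
  · exact bkH_chain φ ψ hφψ _ tx.2
  · apply Continuous.subtype_mk
    apply continuous_pi
    intro q
    unfold bkH
    apply Continuous.add <;> apply continuous_finset_sum <;> intro p _
    · unfold bkW0
      exact ((hcS p).min hct).sub ((hcT p).min hct)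
    · unfold bkW1
      exact ((hcS p).sub ((hcS p).min hct)).sub ((hcT p).sub ((hcT p).min hct))
  · intro x
    apply Subtype.ext; funext q
    show bkH φ ψ (1 - ((0 : unitInterval) : ℝ)) x.1 q = (φ.realize x).1 q
    rw [realize_apply]
    norm_num [bkH_one]
  · intro x
    apply Subtype.ext; funext q
    show bkH φ ψ (1 - ((1 : unitInterval) : ℝ)) x.1 q = (ψ.realize x).1 q
    rw [realize_apply]
    norm_num [bkH_zero]

end Homotopy2
section Fold

lemma homotopyEquiv_of_fold {P Q : Type*} [PartialOrder P] [PartialOrder Q]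
    [Fintype P] [Fintype Q] [DecidableEq P] [DecidableEq Q]
    (ρ : P →o Q) (ε : Q →o P) (μ : P →o P)
    (h1 : ρ.comp ε = OrderHom.id) (h2 : ε.comp ρ ≤ μ) (h3 : OrderHom.id ≤ μ) :
    Nonempty (ContinuousMap.HomotopyEquiv (OrderComplex P) (OrderComplex Q)) := by
  refine ⟨⟨ρ.realize, ε.realize, ?_, ?_⟩⟩
  · rw [← realize_comp]
    have ha := realize_homotopic_of_le h2
    have hb := realize_homotopic_of_le h3
    have hc := ha.trans hb.symm
    rwa [realize_id] at hc
  · rw [← realize_comp, h1, realize_id]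

end Fold
section Leaf
open SimpleGraph

lemma exists_leaf {V : Type*} [Fintype V] {F : SimpleGraph V} (hF : F.IsAcyclic)
    {a b : V} (hab : F.Adj a b) :
    ∃ v w, F.Adj v w ∧ ∀ y, F.Adj v y → y = w := by
  classical
  set L : Set ℕ := {k | ∃ (u v : V) (p : F.Walk u v), p.IsPath ∧ p.length = k} with hL
  have hbd : Fintype.card V ∈ upperBounds L := by
    rintro k ⟨u, v, p, hp, rfl⟩
    have h1 := p.length_support
    have h2 := hp.support_nodup.length_le_card
    omega
  have h1L : (1 : ℕ) ∈ L := by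
    refine ⟨a, b, SimpleGraph.Walk.cons hab SimpleGraph.Walk.nil, ?_, rfl⟩
    simp [SimpleGraph.Walk.cons_isPath_iff, hab.ne]
  have hNmem : sSup L ∈ L := Nat.sSup_mem ⟨1, h1L⟩ ⟨_, hbd⟩
  have hN1 : 1 ≤ sSup L := le_csSup ⟨_, hbd⟩ h1L
  obtain ⟨u, v, p, hp, hlen⟩ := hNmem
  cases p with
  | nil => simp at hlen; omega
  | @cons _ b' _ hadj q =>
    refine ⟨u, b', hadj, fun y hy => ?_⟩
    by_contra hyb
    by_cases hmem : y ∈ (SimpleGraph.Walk.cons hadj q).support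
    · -- build a cycle
      set r := (SimpleGraph.Walk.cons hadj q).takeUntil y hmem with hr
      have hrp : r.IsPath := hp.takeUntil hmem
      have hedge : s(u, y) ∉ r.reverse.edges := by
        rw [SimpleGraph.Walk.edges_reverse, List.mem_reverse]
        intro hmem2
        have hsub := (SimpleGraph.Walk.edges_takeUntil_subset (SimpleGraph.Walk.cons hadj q) hmem) hmem2
        rw [SimpleGraph.Walk.edges_cons, List.mem_cons] at hsub
        rcases hsub with h | h
        · rw [Sym2.eq_iff] at h
          rcases h with ⟨-, h⟩ | ⟨h, -⟩
          · exact hyb h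
          · exact hadj.ne h
        · have := SimpleGraph.Walk.fst_mem_support_of_mem_edges q h
          rw [SimpleGraph.Walk.cons_isPath_iff] at hp
          exact hp.2 this
      have hcyc : (SimpleGraph.Walk.cons hy r.reverse).IsCycle :=
        (SimpleGraph.Walk.cons_isCycle_iff r.reverse hy).2 ⟨hrp.reverse, hedge⟩
      exact hF _ hcyc
    · -- extend the path, contradicting maximality
      have hp' : (SimpleGraph.Walk.cons hy.symm (SimpleGraph.Walk.cons hadj q)).IsPath := by
        rw [SimpleGraph.Walk.cons_isPath_iff]
        exact ⟨hp, hmem⟩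
      have hmemL : (SimpleGraph.Walk.cons hadj q).length + 1 ∈ L :=
        ⟨y, v, _, hp', by simp⟩
      have := le_csSup ⟨_, hbd⟩ hmemL
      omega

end Leaf
section GraphFold
open SimpleGraph

lemma fold_homotopyEquiv {V W : Type*} [Fintype V] [DecidableEq V] [Finite W]
    (F : SimpleGraph V) (B : W → W → Prop) {v w : V}
    (hvw : F.Adj v w) (hleaf : ∀ y, F.Adj v y → y = w) :
    Nonempty (ContinuousMap.HomotopyEquiv (HomComplex Fᶜ.Adj B)
      (HomComplex (fun a b : {x : V // x ≠ w} => Fᶜ.Adj a.1 b.1) B)) := by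
  classical
  have hvne : v ≠ w := hvw.ne
  have hadj_v : ∀ {y : V}, Fᶜ.Adj w y → Fᶜ.Adj v y := by
    intro y hy
    rw [compl_adj] at hy ⊢
    refine ⟨fun hvy => ?_, fun hFvy => ?_⟩
    · exact hy.2 (hvy ▸ hvw.symm)
    · exact hy.1 (hleaf y hFvy).symm
  set A' : {x : V // x ≠ w} → {x : V // x ≠ w} → Prop := fun a b => Fᶜ.Adj a.1 b.1 with hA'
  let ρ : HomCell Fᶜ.Adj B →o HomCell A' B :=
    HomCell.pull (fun x => (x.1 : V)) (fun x y h => h)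
  let ε : HomCell A' B →o HomCell Fᶜ.Adj B :=
    { toFun := fun c =>
        { η := fun x => if h : x = w then c.η ⟨v, hvne⟩ else c.η ⟨x, h⟩
          nonempty := fun x => by split <;> exact c.nonempty _
          adj := by
            intro x y hxy a ha b hb
            by_cases hx : x = w <;> by_cases hy : y = w
            · exact absurd (hx ▸ hy ▸ hxy) (Fᶜ.irrefl)
            · rw [dif_pos hx] at ha; rw [dif_neg hy] at hb
              exact c.adj (show A' ⟨v, hvne⟩ ⟨y, hy⟩ from hadj_v (hx ▸ hxy)) a ha b hb
            · rw [dif_neg hx] at ha; rw [dif_pos hy] at hb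
              exact c.adj (show A' ⟨x, hx⟩ ⟨v, hvne⟩ from (hadj_v (hy ▸ hxy).symm).symm) a ha b hb
            · rw [dif_neg hx] at ha; rw [dif_neg hy] at hb
              exact c.adj (show A' ⟨x, hx⟩ ⟨y, hy⟩ from hxy) a ha b hb }
      monotone' := by
        intro c d h x
        dsimp only
        split <;> exact h _ }
  let μ : HomCell Fᶜ.Adj B →o HomCell Fᶜ.Adj B :=
    { toFun := fun c =>
        { η := fun x => if x = w then c.η w ∪ c.η v else c.η x
          nonempty := fun x => by
            split
            · exact (c.nonempty w).inl
            · exact c.nonempty x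
          adj := by
            intro x y hxy a ha b hb
            by_cases hx : x = w <;> by_cases hy : y = w
            · exact absurd (hx ▸ hy ▸ hxy) (Fᶜ.irrefl)
            · rw [if_pos hx] at ha; rw [if_neg hy] at hb
              rcases ha with ha | ha
              · exact c.adj (hx ▸ hxy) a ha b hb
              · exact c.adj (hadj_v (hx ▸ hxy)) a ha b hb
            · rw [if_neg hx] at ha; rw [if_pos hy] at hb
              rcases hb with hb | hb
              · exact c.adj (hy ▸ hxy) a ha b hb
              · exact c.adj ((hadj_v (hy ▸ hxy).symm).symm) a ha b hb
            · rw [if_neg hx] at ha; rw [if_neg hy] at hb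
              exact c.adj hxy a ha b hb }
      monotone' := by
        intro c d h x
        dsimp only
        split
        · exact Set.union_subset_union (h w) (h v)
        · exact h x }
  refine homotopyEquiv_of_fold ρ ε μ ?_ ?_ ?_
  · apply OrderHom.ext
    funext c
    apply HomCell.ext
    funext x
    show (if h : (x : V) = w then _ else c.η ⟨x.1, h⟩) = c.η x
    rw [dif_neg x.2]
  · intro c x
    by_cases hx : x = w
    · show (if h : x = w then (ρ c).η ⟨v, hvne⟩ else (ρ c).η ⟨x, h⟩)
        ⊆ (if x = w then c.η w ∪ c.η v else c.η x)
      rw [dif_pos hx, if_pos hx]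
      exact Set.subset_union_right
    · show (if h : x = w then (ρ c).η ⟨v, hvne⟩ else (ρ c).η ⟨x, h⟩)
        ⊆ (if x = w then c.η w ∪ c.η v else c.η x)
      rw [dif_neg hx, if_neg hx]
      exact subset_rfl
  · intro c x
    by_cases hx : x = w
    · show c.η x ⊆ (if x = w then c.η w ∪ c.η v else c.η x)
      rw [if_pos hx, hx]
      exact Set.subset_union_left
    · show c.η x ⊆ (if x = w then c.η w ∪ c.η v else c.η x)
      rw [if_neg hx]

end GraphFold
section BaseEquiv

lemma homCell_homotopyEquiv_of_equiv {V V' W : Type*} [Finite V] [Finite V'] [Finite W]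
    (e : V ≃ V') (A : V → V → Prop) (A' : V' → V' → Prop)
    (hA : ∀ x y, A x y ↔ A' (e x) (e y)) (B : W → W → Prop) :
    Nonempty (ContinuousMap.HomotopyEquiv (HomComplex A B) (HomComplex A' B)) := by
  classical
  let ρ : HomCell A B →o HomCell A' B := HomCell.pull (fun x' => e.symm x')
    (fun x y h => by
      have h2 := hA (e.symm x) (e.symm y)
      rw [e.apply_symm_apply, e.apply_symm_apply] at h2
      exact h2.2 h)
  let ε : HomCell A' B →o HomCell A B := HomCell.pull (fun x => e x)
    (fun x y h => (hA x y).1 h)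
  refine homotopyEquiv_of_fold ρ ε OrderHom.id ?_ (le_of_eq ?_) le_rfl
  · apply OrderHom.ext
    funext c
    apply HomCell.ext
    funext x
    show c.η (e (e.symm x)) = c.η x
    rw [e.apply_symm_apply]
  · apply OrderHom.ext
    funext c
    apply HomCell.ext
    funext x
    show c.η (e.symm (e x)) = c.η x
    rw [e.symm_apply_apply]

open SimpleGraph in
lemma base_no_edges {V : Type*} [Fintype V] [DecidableEq V] (F : SimpleGraph V)
    (hne : ∀ a b, ¬F.Adj a b) (m n : ℕ)
    (hmax : ∃ s : Finset V, s.card = m ∧ (∀ a ∈ s, ∀ b ∈ s, ¬F.Adj a b) ∧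
      ∀ t : Finset V, (∀ a ∈ t, ∀ b ∈ t, ¬F.Adj a b) → t.card ≤ m) :
    Nonempty (ContinuousMap.HomotopyEquiv
      (HomComplex Fᶜ.Adj (⊤ : SimpleGraph (Fin n)).Adj)
      (HomComplex (⊤ : SimpleGraph (Fin m)).Adj (⊤ : SimpleGraph (Fin n)).Adj)) := by
  obtain ⟨s, hcard, -, hmaxs⟩ := hmax
  have hm : Fintype.card V = m := by
    have h1 : Fintype.card V ≤ m := by
      simpa using hmaxs Finset.univ (fun a _ b _ => hne a b)
    have h2 : m ≤ Fintype.card V := hcard ▸ Finset.card_le_univ s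
    omega
  refine homCell_homotopyEquiv_of_equiv (Fintype.equivFinOfCardEq hm) _ _ ?_ _
  intro x y
  rw [compl_adj, top_adj]
  constructor
  · rintro ⟨hxy, -⟩
    exact fun h => hxy ((Fintype.equivFinOfCardEq hm).injective h)
  · intro h
    exact ⟨fun h' => h (h' ▸ rfl), hne x y⟩

end BaseEquiv
section MainProof
open SimpleGraph

universe u

lemma main_aux (k : ℕ) : ∀ {V : Type u} [Fintype V] [DecidableEq V] (F : SimpleGraph V),
    Fintype.card V ≤ k → F.IsAcyclic → ∀ (m n : ℕ),
    (∃ s : Finset V, s.card = m ∧ (∀ a ∈ s, ∀ b ∈ s, ¬F.Adj a b) ∧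
      ∀ t : Finset V, (∀ a ∈ t, ∀ b ∈ t, ¬F.Adj a b) → t.card ≤ m) →
    Nonempty (ContinuousMap.HomotopyEquiv
      (HomComplex Fᶜ.Adj (⊤ : SimpleGraph (Fin n)).Adj)
      (HomComplex (⊤ : SimpleGraph (Fin m)).Adj (⊤ : SimpleGraph (Fin n)).Adj)) := by
  induction k with
  | zero =>
    intro V _ _ F hcard hF m n hmax
    refine base_no_edges F (fun a b hab => ?_) m n hmax
    have : 0 < Fintype.card V := Fintype.card_pos_iff.2 ⟨a⟩
    omega
  | succ k ih =>
    intro V _ _ F hcard hF m n hmax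
    classical
    by_cases hedge : ∃ a b, F.Adj a b
    · obtain ⟨a, b, hab⟩ := hedge
      obtain ⟨v, w, hvw, hleaf⟩ := exists_leaf hF hab
      have hvne : v ≠ w := hvw.ne
      obtain ⟨E1⟩ := fold_homotopyEquiv F (⊤ : SimpleGraph (Fin n)).Adj hvw hleaf
      set F' : SimpleGraph {x : V // x ≠ w} :=
        SimpleGraph.comap (fun x => (x : V)) F with hF'def
      have hrel : (fun a b : {x : V // x ≠ w} => Fᶜ.Adj a.1 b.1) = F'ᶜ.Adj := by
        funext a b
        apply propext
        rw [compl_adj, compl_adj]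
        constructor
        · rintro ⟨h1, h2⟩
          exact ⟨fun h => h1 (congrArg Subtype.val h), h2⟩
        · rintro ⟨h1, h2⟩
          exact ⟨fun h => h1 (Subtype.ext h), h2⟩
      rw [hrel] at E1
      have hcard' : Fintype.card {x : V // x ≠ w} ≤ k := by
        have h1 : Fintype.card {x : V // x ≠ w} < Fintype.card V := by
          apply Fintype.card_subtype_lt (x := w)
          simp
        omega
      have hF'acyc : F'.IsAcyclic := by
        intro u c hc
        let hhom : F' →g F := ⟨fun x => (x : V), fun h => h⟩
        have hinj : Function.Injective ⇑hhom := by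
          intro a b h
          exact Subtype.val_injective (show (a : V) = b from h)
        exact hF _ (hc.map (f := hhom) hinj)
      -- transfer the maximal independent set
      obtain ⟨s, hs_card, hs_ind, hs_max⟩ := hmax
      have key : ∃ s₀ : Finset V, s₀.card = m ∧ (∀ a ∈ s₀, ∀ b ∈ s₀, ¬F.Adj a b) ∧ w ∉ s₀ := by
        by_cases hws : w ∈ s
        · have hvs : v ∉ s := fun hv => hs_ind v hv w hws hvw
          refine ⟨insert v (s.erase w), ?_, ?_, ?_⟩
          · rw [Finset.card_insert_of_notMem (fun h => hvs (Finset.mem_of_mem_erase h)),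
              Finset.card_erase_of_mem hws]
            have : 1 ≤ s.card := Finset.card_pos.2 ⟨w, hws⟩
            omega
          · intro x hx y hy hadj
            rcases Finset.mem_insert.1 hx with hx' | hx' <;>
              rcases Finset.mem_insert.1 hy with hy' | hy'
            · exact F.irrefl (hx' ▸ hy' ▸ hadj)
            · subst hx'
              exact (Finset.mem_erase.1 hy').1 (hleaf _ hadj)
            · subst hy'
              exact (Finset.mem_erase.1 hx').1 (hleaf _ hadj.symm)
            · exact hs_ind x (Finset.mem_of_mem_erase hx') y (Finset.mem_of_mem_erase hy') hadj
          · intro hw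
            rcases Finset.mem_insert.1 hw with h | h
            · exact hvne h.symm
            · exact (Finset.mem_erase.1 h).1 rfl
        · exact ⟨s, hs_card, hs_ind, hws⟩
      obtain ⟨s₀, hs₀_card, hs₀_ind, hws₀⟩ := key
      have hmax' : ∃ s' : Finset {x : V // x ≠ w}, s'.card = m ∧
          (∀ a ∈ s', ∀ b ∈ s', ¬F'.Adj a b) ∧
          ∀ t : Finset {x : V // x ≠ w}, (∀ a ∈ t, ∀ b ∈ t, ¬F'.Adj a b) → t.card ≤ m := by
        refine ⟨s₀.subtype (· ≠ w), ?_, ?_, ?_⟩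
        · have h1 : (s₀.subtype (· ≠ w)).map (Function.Embedding.subtype _) = s₀.filter (· ≠ w) :=
            Finset.subtype_map _
          have h2 : s₀.filter (· ≠ w) = s₀ := by
            apply Finset.filter_true_of_mem
            intro x hx
            exact fun h => hws₀ (h ▸ hx)
          have h3 := congrArg Finset.card h1
          rw [Finset.card_map, h2] at h3
          rw [h3, hs₀_card]
        · intro x hx y hy
          rw [Finset.mem_subtype] at hx hy
          exact hs₀_ind x.1 hx y.1 hy
        · intro t ht
          have hind : ∀ a ∈ t.map (Function.Embedding.subtype _),
              ∀ b ∈ t.map (Function.Embedding.subtype _), ¬F.Adj a b := by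
            intro x hx y hy
            rw [Finset.mem_map] at hx hy
            obtain ⟨x', hx', rfl⟩ := hx
            obtain ⟨y', hy', rfl⟩ := hy
            exact ht x' hx' y' hy'
          have := hs_max _ hind
          rwa [Finset.card_map] at this
      obtain ⟨E2⟩ := ih F' hcard' hF'acyc m n hmax'
      exact ⟨E1.trans E2⟩
    · push_neg at hedge
      exact base_no_edges F hedge m n hmax

end MainProof

/-- **Babson–Kozlov**: if `F` is a forest and `m` is the maximal cardinality of an
independent set of vertices in `F`, then `Hom(F̄, K_n) ≃ Hom(K_m, K_n)`, where `F̄`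
is the (unlooped) complement of `F`. -/
theorem forest_complement_homotopyEquiv {V : Type*} [Fintype V] [DecidableEq V]
    (F : SimpleGraph V) (hF : F.IsAcyclic) (m n : ℕ)
    (hmax : ∃ s : Finset V, s.card = m ∧ (∀ a ∈ s, ∀ b ∈ s, ¬F.Adj a b) ∧
      ∀ t : Finset V, (∀ a ∈ t, ∀ b ∈ t, ¬F.Adj a b) → t.card ≤ m) :
    Nonempty (ContinuousMap.HomotopyEquiv
      (HomComplex Fᶜ.Adj (⊤ : SimpleGraph (Fin n)).Adj)
      (HomComplex (⊤ : SimpleGraph (Fin m)).Adj (⊤ : SimpleGraph (Fin n)).Adj)) := by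
  exact main_aux (Fintype.card V) F le_rfl hF m n hmax
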